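/- Let K be a normed field (with multiplicative norm) and A a commutative K-algebra equipped with a complete nonarchimedean ring norm satisfying ‖c•a‖ ≤ ‖c‖·‖a‖ for c ∈ K, a ∈ A. Let 𝔞 be a closed ideal of A, let (a_i)_{i∈ℕ} be a sequence in A with ‖a_i‖ → 0, and let (r_m)_{m∈ℕ} be a sequence of nonzero elements of K with ‖r_m‖ ≤ 1 for all m and ‖r_m‖ → 0. If for every m the convergent sum Σ_{i=0}^∞ r_m^i • a_i lies in 𝔞, then a_i ∈ 𝔞 for every i. (This is the coefficientwise form of the statement that the restricted power series g(S) = Σ_i a_i S^i lies in 𝔞·A⟨S⟩; for an affinoid algebra A every ideal is automatically closed.) -/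

import Mathlib

open Filter

lemma na_finset_norm_le {A : Type*} [NormedCommRing A]
    (hna : ∀ x y : A, ‖x + y‖ ≤ max ‖x‖ ‖y‖)
    {ι : Type*} (f : ι → A) (t : Finset ι) {ε : ℝ} (hε : 0 ≤ ε)
    (h : ∀ i ∈ t, ‖f i‖ ≤ ε) : ‖∑ i ∈ t, f i‖ ≤ ε := by
  classical
  induction t using Finset.induction with
  | empty => simpa using hε
  | insert _ _ hi ih =>
    rw [Finset.sum_insert hi]
    exact le_trans (hna _ _) (max_le (h _ (Finset.mem_insert_self _ _))
      (ih fun i hi' => h i (Finset.mem_insert_of_mem hi')))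

lemma na_summable {A : Type*} [NormedCommRing A] [CompleteSpace A]
    (hna : ∀ x y : A, ‖x + y‖ ≤ max ‖x‖ ‖y‖)
    (f : ℕ → A) (hf : Tendsto (fun i => ‖f i‖) atTop (nhds 0)) : Summable f := by
  rw [summable_iff_cauchySeq_finset, cauchySeq_finset_iff_sum_vanishing]
  intro e he
  obtain ⟨ε, hε, hball⟩ := Metric.mem_nhds_iff.mp he
  obtain ⟨N, hN⟩ := Metric.tendsto_atTop.mp hf (ε/2) (by positivity)
  refine ⟨Finset.range N, fun t ht => hball ?_⟩
  rw [Metric.mem_ball, dist_zero_right]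
  refine lt_of_le_of_lt (na_finset_norm_le hna f t (by positivity) fun i hi => ?_)
    (half_lt_self hε)
  have hNi : N ≤ i := by
    by_contra hlt
    exact (Finset.disjoint_left.mp ht hi) (Finset.mem_range.mpr (lt_of_not_ge hlt))
  have := hN i hNi
  rw [Real.dist_eq, sub_zero, abs_of_nonneg (norm_nonneg _)] at this
  exact this.le

lemma na_norm_tsum_le {A : Type*} [NormedCommRing A] [CompleteSpace A]
    (hna : ∀ x y : A, ‖x + y‖ ≤ max ‖x‖ ‖y‖)
    (f : ℕ → A) (hf : Summable f) {ε : ℝ} (hε : 0 ≤ ε)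
    (h : ∀ i, ‖f i‖ ≤ ε) : ‖∑' i, f i‖ ≤ ε := by
  have hs := hf.hasSum
  exact le_of_tendsto' hs.norm fun s => na_finset_norm_le hna f s hε fun i _ => h i

/-- Let `K` be a normed field and `A` a commutative
`K`-algebra with a complete nonarchimedean ring norm satisfying
`‖c • a‖ ≤ ‖c‖·‖a‖`.  Let `𝔞` be a closed ideal of `A`, let `(a_i)` be a
sequence in `A` with `‖a_i‖ → 0`, and let `(r_m)` be a sequence of nonzero
elements of `K` with `‖r_m‖ ≤ 1` and `‖r_m‖ → 0`.  If for every `m` the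
convergent sum `Σ_i r_m^i • a_i` lies in `𝔞`, then `a_i ∈ 𝔞` for every `i`.
(Coefficientwise form of: the restricted power series `g(S) = Σ a_i S^i` lies
in `𝔞·A⟨S⟩`.) -/
theorem coeff_mem_of_eval_mem {K : Type*} [NormedField K] {A : Type*}
    [NormedCommRing A] [CompleteSpace A] [Algebra K A]
    (hsmul : ∀ (c : K) (a : A), ‖c • a‖ ≤ ‖c‖ * ‖a‖)
    (hna : ∀ x y : A, ‖x + y‖ ≤ max ‖x‖ ‖y‖)
    (𝔞 : Ideal A) (h𝔞 : IsClosed (𝔞 : Set A))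
    (a : ℕ → A) (ha : Filter.Tendsto (fun i => ‖a i‖) Filter.atTop (nhds 0))
    (r : ℕ → K) (hr0 : ∀ m, r m ≠ 0) (hr1 : ∀ m, ‖r m‖ ≤ 1)
    (hr : Filter.Tendsto (fun m => ‖r m‖) Filter.atTop (nhds 0))
    (hsum : ∀ m, (∑' i : ℕ, (r m) ^ i • a i) ∈ 𝔞) :
    ∀ i, a i ∈ 𝔞 := by
  -- global bound on ‖a i‖
  obtain ⟨C, hC⟩ := ha.bddAbove_range
  have hC' : ∀ i, ‖a i‖ ≤ C := fun i => hC ⟨i, rfl⟩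
  have hC0 : 0 ≤ C := le_trans (norm_nonneg _) (hC' 0)
  -- norm bound on terms
  have hterm : ∀ (c : K) (n i : ℕ), ‖c ^ i • a n‖ ≤ ‖c‖ ^ i * ‖a n‖ := by
    intro c n i
    calc ‖c ^ i • a n‖ ≤ ‖c ^ i‖ * ‖a n‖ := hsmul _ _
    _ = ‖c‖ ^ i * ‖a n‖ := by rw [norm_pow]
  have hpow_le : ∀ m i, ‖r m‖ ^ i ≤ 1 := fun m i =>
    pow_le_one₀ (norm_nonneg _) (hr1 m)
  -- summability of any shifted series
  have hsummable : ∀ (m k : ℕ), Summable (fun i => (r m) ^ i • a (i + k)) := by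
    intro m k
    refine na_summable hna _ ?_
    have hshift : Tendsto (fun i => ‖a (i + k)‖) atTop (nhds 0) :=
      ha.comp (tendsto_atTop_atTop.mpr fun b => ⟨b, fun n hn => le_trans hn (Nat.le_add_right _ _)⟩)
    refine squeeze_zero (fun i => norm_nonneg _) (fun i => ?_) hshift
    calc ‖(r m) ^ i • a (i + k)‖ ≤ ‖r m‖ ^ i * ‖a (i + k)‖ := hterm _ _ _
    _ ≤ 1 * ‖a (i + k)‖ := by
        apply mul_le_mul_of_nonneg_right (hpow_le m i) (norm_nonneg _)
    _ = ‖a (i + k)‖ := one_mul _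
  intro i
  induction i using Nat.strong_induction_on with
  | _ n ih =>
  -- tail b m ∈ 𝔞
  have hb : ∀ m, (∑' i : ℕ, (r m) ^ i • a (i + n)) ∈ 𝔞 := by
    intro m
    set b := ∑' i : ℕ, (r m) ^ i • a (i + n) with hbdef
    have hsplit := Summable.sum_add_tsum_nat_add n (hsummable m 0)
    simp only [add_zero] at hsplit
    have hsn : (r m) ^ n • b ∈ 𝔞 := by
      have : (r m) ^ n • b = (∑' i : ℕ, (r m) ^ i • a i) - ∑ j ∈ Finset.range n, (r m) ^ j • a j := by
        rw [← hsplit]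
        rw [Algebra.smul_def, ← (hsummable m n).tsum_mul_left]
        rw [add_sub_cancel_left]
        congr 1
        funext i
        rw [Algebra.smul_def, Algebra.smul_def, ← mul_assoc, ← map_mul, ← pow_add]
        ring_nf
      rw [this]
      refine Submodule.sub_mem _ (hsum m) (Ideal.sum_mem _ fun j hj => ?_)
      rw [Algebra.smul_def]
      exact Ideal.mul_mem_left _ _ (ih j (Finset.mem_range.mp hj))
    have : b = algebraMap K A ((r m) ^ n)⁻¹ * ((r m) ^ n • b) := by
      rw [Algebra.smul_def, ← mul_assoc, ← map_mul, inv_mul_cancel₀ (pow_ne_zero n (hr0 m)),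
        map_one, one_mul]
    rw [this]
    exact Ideal.mul_mem_left _ _ hsn
  -- b m = a n + t m with t m → 0
  have hbeq : ∀ m, (∑' i : ℕ, (r m) ^ i • a (i + n)) =
      a n + ∑' i : ℕ, (r m) ^ (i + 1) • a (i + 1 + n) := by
    intro m
    have := Summable.tsum_eq_zero_add (hsummable m n)
    simpa [pow_zero, one_smul] using this
  have htail : Tendsto (fun m => ∑' i : ℕ, (r m) ^ (i + 1) • a (i + 1 + n)) atTop (nhds 0) := by
    rw [tendsto_zero_iff_norm_tendsto_zero]
    refine squeeze_zero (fun m => norm_nonneg _) (fun m => ?_) (by simpa using hr.const_mul C)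
    have hsum2 : Summable (fun i => (r m) ^ (i + 1) • a (i + 1 + n)) := by
      have := (hsummable m n).comp_injective (add_right_injective 1)
      simpa using ((summable_nat_add_iff 1).mpr (hsummable m n))
    refine na_norm_tsum_le hna _ hsum2 (by positivity) fun i => ?_
    calc ‖(r m) ^ (i + 1) • a (i + 1 + n)‖ ≤ ‖r m‖ ^ (i + 1) * ‖a (i + 1 + n)‖ := hterm _ _ _
    _ ≤ ‖r m‖ * C := by
        rw [pow_succ']
        apply mul_le_mul
        · exact mul_le_of_le_one_right (norm_nonneg _) (hpow_le m i)
        · exact hC' _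
        · exact norm_nonneg _
        · exact norm_nonneg _
    _ = C * ‖r m‖ := mul_comm _ _
  -- conclude
  have hlim : Tendsto (fun m => ∑' i : ℕ, (r m) ^ i • a (i + n)) atTop (nhds (a n)) := by
    simp only [hbeq]
    simpa using (tendsto_const_nhds.add htail)
  exact h𝔞.mem_of_tendsto hlim (Filter.Eventually.of_forall hb)
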